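/- arXiv:1707.03575 — 5 statements merged into one kernel-verified Lean document; each statement's English description precedes it below -/
import Mathlib

section
/- Fix x* > 0 and let u : [0,x*] → ℝ be continuous. The pair (Υ^u, p^u) verifies the dimensionless moving boundary conditions of the 1D RTM model with inlet pressure 2 and initial/outlet pressure 1: for every t with 0 < t < τ*_u one has (i) p^u(0,t) = 2, (ii) p^u(Υ^u(t), t) = 1, (iii) p^u(x,t) = 1 for all x with Υ^u(t) < x ≤ x*, (iv) Υ^u(0) = 0, and (v) the Stefan condition holds: the derivative of Υ^u at t plus exp(u(Υ^u(t))) times the one-sided spatial derivative of x ↦ p^u(x,t) at x = Υ^u(t) taken from within [0, Υ^u(t)] equals 0; explicitly, dΥ^u/dt(t) = 1/F_u(Υ^u(t)) and the one-sided spatial derivative equals −exp(−u(Υ^u(t)))/F_u(Υ^u(t)). -/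
open Set

noncomputable def Fu (xs : ℝ) (h : 0 ≤ xs) (u : C(Icc (0:ℝ) xs, ℝ)) (x : ℝ) : ℝ :=
  ∫ z in (0:ℝ)..x, Real.exp (-(u (projIcc 0 xs h z)))

noncomputable def Wu (xs : ℝ) (h : 0 ≤ xs) (u : C(Icc (0:ℝ) xs, ℝ)) (x : ℝ) : ℝ :=
  ∫ ξ in (0:ℝ)..x, Fu xs h u ξ

noncomputable def tau (xs : ℝ) (h : 0 ≤ xs) (u : C(Icc (0:ℝ) xs, ℝ)) : ℝ :=
  Wu xs h u xs


/-- Dimensionless pressure, given the moving front `Υ`: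
`p(x,t) = 2 - F_u(x)/F_u(Υ(t))` behind the front (`x ≤ Υ t`) and `1` ahead of it. -/
noncomputable def press (xs : ℝ) (h : 0 ≤ xs) (u : C(Icc (0:ℝ) xs, ℝ)) (Υ : ℝ → ℝ)
    (x t : ℝ) : ℝ :=
  if x ≤ Υ t then 2 - Fu xs h u x / Fu xs h u (Υ t) else 1

section aux
variable (xs : ℝ) (h : 0 ≤ xs) (u : C(Icc (0:ℝ) xs, ℝ))

lemma g_cont : Continuous (fun z : ℝ => Real.exp (-(u (projIcc 0 xs h z)))) :=
  Real.continuous_exp.comp (u.continuous.comp continuous_projIcc).neg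

lemma Fu_hasDerivAt (x : ℝ) :
    HasDerivAt (Fu xs h u) (Real.exp (-(u (projIcc 0 xs h x)))) x :=
  ((g_cont xs h u).integral_hasStrictDerivAt 0 x).hasDerivAt

lemma Fu_zero : Fu xs h u 0 = 0 := intervalIntegral.integral_same

lemma Fu_strictMono : StrictMono (Fu xs h u) := by
  intro a b hab
  have hpos := intervalIntegral.intervalIntegral_pos_of_pos
    ((g_cont xs h u).intervalIntegrable a b) (fun x => Real.exp_pos _) hab
  have hadd := intervalIntegral.integral_add_adjacent_intervals
    ((g_cont xs h u).intervalIntegrable (μ := MeasureTheory.volume) 0 a) ((g_cont xs h u).intervalIntegrable (μ := MeasureTheory.volume) a b)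
  simp only [Fu]
  linarith [hadd, hpos]

lemma Fu_cont : Continuous (Fu xs h u) :=
  continuous_iff_continuousAt.mpr fun x => (Fu_hasDerivAt xs h u x).continuousAt

lemma Wu_hasDerivAt (x : ℝ) : HasDerivAt (Wu xs h u) (Fu xs h u x) x :=
  ((Fu_cont xs h u).integral_hasStrictDerivAt 0 x).hasDerivAt

lemma Wu_zero : Wu xs h u 0 = 0 := intervalIntegral.integral_same

lemma Fu_pos {x : ℝ} (hx : 0 < x) : 0 < Fu xs h u x := by
  have := Fu_strictMono xs h u hx
  rwa [Fu_zero] at this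

lemma Wu_strictMonoOn : StrictMonoOn (Wu xs h u) (Ici 0) := by
  intro a ha b _ hab
  have hpos := intervalIntegral.intervalIntegral_pos_of_pos_on
    ((Fu_cont xs h u).intervalIntegrable a b)
    (fun x hx => Fu_pos xs h u (lt_of_le_of_lt ha hx.1)) hab
  have hadd := intervalIntegral.integral_add_adjacent_intervals
    ((Fu_cont xs h u).intervalIntegrable (μ := MeasureTheory.volume) 0 a) ((Fu_cont xs h u).intervalIntegrable (μ := MeasureTheory.volume) a b)
  simp only [Wu]
  linarith [hadd, hpos]

end aux

/-- the pair `(Υ^u, p^u)` satisfies the dimensionless moving boundary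
conditions with inlet pressure 2 and initial/outlet pressure 1, including the
Stefan condition at the front. -/
theorem stmt_3 (xs : ℝ) (hxs : 0 < xs) (u : C(Icc (0:ℝ) xs, ℝ)) (Υ : ℝ → ℝ)
    (hΥ : ∀ s ∈ Icc (0:ℝ) (tau xs hxs.le u), Υ s ∈ Icc 0 xs ∧ Wu xs hxs.le u (Υ s) = s)
    (t : ℝ) (ht0 : 0 < t) (htτ : t < tau xs hxs.le u) :
    press xs hxs.le u Υ 0 t = 2 ∧
    press xs hxs.le u Υ (Υ t) t = 1 ∧
    (∀ x : ℝ, Υ t < x → x ≤ xs → press xs hxs.le u Υ x t = 1) ∧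
    Υ 0 = 0 ∧
    HasDerivAt Υ (1 / Fu xs hxs.le u (Υ t)) t ∧
    HasDerivWithinAt (fun x => press xs hxs.le u Υ x t)
      (-Real.exp (-(u (projIcc 0 xs hxs.le (Υ t)))) / Fu xs hxs.le u (Υ t))
      (Icc 0 (Υ t)) (Υ t) ∧
    1 / Fu xs hxs.le u (Υ t) +
        Real.exp (u (projIcc 0 xs hxs.le (Υ t))) *
          (-Real.exp (-(u (projIcc 0 xs hxs.le (Υ t)))) / Fu xs hxs.le u (Υ t)) = 0 := by
  have h := hxs.le
  have hτpos : 0 < tau xs h u := ht0.trans htτ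
  obtain ⟨haI, haW⟩ := hΥ t ⟨ht0.le, htτ.le⟩
  set a := Υ t with ha_def
  have ha0 : 0 < a := by
    rcases lt_or_eq_of_le haI.1 with h' | h'
    · exact h'
    · exfalso; rw [← h', Wu_zero] at haW; linarith
  have haxs : a < xs := by
    rcases lt_or_eq_of_le haI.2 with h' | h'
    · exact h'
    · exfalso; rw [h'] at haW; rw [tau] at htτ; linarith
  have hFpos : 0 < Fu xs h u a := Fu_pos xs h u ha0
  -- continuity of Υ at t
  have hcont : ContinuousAt Υ t := by
    rw [Metric.continuousAt_iff]
    intro ε hε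
    set b := max 0 (a - ε) with hb_def
    set c := min xs (a + ε) with hc_def
    have hba : b < a := max_lt ha0 (by linarith)
    have hac : a < c := lt_min haxs (by linarith)
    have hb0 : 0 ≤ b := le_max_left _ _
    have hc0 : 0 ≤ c := le_trans (hb0.trans hba.le) hac.le
    have hWb : Wu xs h u b < t := by
      have := Wu_strictMonoOn xs h u hb0 (hb0.trans hba.le) hba
      rwa [haW] at this
    have hWc : t < Wu xs h u c := by
      have := Wu_strictMonoOn xs h u (hb0.trans hba.le) hc0 hac
      rwa [haW] at this
    set d := min (min (t - Wu xs h u b) (Wu xs h u c - t)) (min t (tau xs h u - t))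
      with hd_def
    have hd1 : d ≤ t - Wu xs h u b := (min_le_left _ _).trans (min_le_left _ _)
    have hd2 : d ≤ Wu xs h u c - t := (min_le_left _ _).trans (min_le_right _ _)
    have hd3 : d ≤ t := (min_le_right _ _).trans (min_le_left _ _)
    have hd4 : d ≤ tau xs h u - t := (min_le_right _ _).trans (min_le_right _ _)
    refine ⟨d, lt_min (lt_min (by linarith) (by linarith)) (lt_min ht0 (by linarith)), ?_⟩
    intro s hs
    rw [Real.dist_eq, abs_lt] at hs
    have hs0 : 0 < s := by linarith
    have hsτ : s < tau xs h u := by linarith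
    obtain ⟨hsI, hsW⟩ := hΥ s ⟨hs0.le, hsτ.le⟩
    have hub : b < Υ s := by
      by_contra h'
      push_neg at h'
      have := (Wu_strictMonoOn xs h u).monotoneOn hsI.1 hb0 h'
      rw [hsW] at this
      linarith
    have huc : Υ s < c := by
      by_contra h'
      push_neg at h'
      have := (Wu_strictMonoOn xs h u).monotoneOn hc0 hsI.1 h'
      rw [hsW] at this
      linarith
    rw [Real.dist_eq, abs_lt]
    constructor
    · have : a - ε ≤ b := le_max_right _ _
      linarith
    · have : c ≤ a + ε := min_le_right _ _
      linarith
  -- derivative of Υ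
  have hWd : HasDerivAt (Wu xs h u) (Fu xs h u a) a := Wu_hasDerivAt xs h u a
  have hder : HasDerivAt Υ (Fu xs h u a)⁻¹ t := by
    refine HasDerivAt.of_local_left_inverse (f := Wu xs h u) hcont ?_ hFpos.ne' ?_
    · exact hWd
    · filter_upwards [isOpen_Ioo.mem_nhds (⟨ht0, htτ⟩ : t ∈ Ioo 0 (tau xs h u))] with y hy
      exact (hΥ y ⟨hy.1.le, hy.2.le⟩).2
  refine ⟨?_, ?_, ?_, ?_, ?_, ?_, ?_⟩
  · rw [press, if_pos ha0.le, Fu_zero, zero_div, sub_zero]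
  · rw [press, if_pos le_rfl, div_self hFpos.ne']; norm_num
  · intro x hax hxxs
    rw [press, if_neg (not_le.mpr hax)]
  · obtain ⟨h0I, h0W⟩ := hΥ 0 ⟨le_rfl, hτpos.le⟩
    by_contra h'
    have h0 : 0 < Υ 0 := lt_of_le_of_ne h0I.1 (Ne.symm h')
    have := Wu_strictMonoOn xs h u (mem_Ici.mpr le_rfl) h0I.1 h0
    rw [h0W, Wu_zero] at this
    exact lt_irrefl 0 this
  · rwa [one_div]
  · have heq : ∀ y ∈ Icc 0 a,
        press xs h u Υ y t = 2 - Fu xs h u y / Fu xs h u a := fun y hy => by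
      rw [press, if_pos hy.2]
    have hda : HasDerivAt (fun x => 2 - Fu xs h u x / Fu xs h u a)
        (-(Real.exp (-(u (projIcc 0 xs h a))) / Fu xs h u a)) a :=
      (((Fu_hasDerivAt xs h u a).div_const _)).const_sub 2
    rw [neg_div]
    exact hda.hasDerivWithinAt.congr heq (heq a ⟨ha0.le, le_rfl⟩)
  · rw [Real.exp_neg]
    field_simp
    ring
end

section
/- Fix x* > 0 and let u : [0,x*] → ℝ be continuous. Then for every t with 0 < t ≤ τ*_u, F_u(Υ^u(t)) ≥ (t/x*)·exp(−2‖u‖); equivalently, 1/F_u(Υ^u(t)) ≤ (x*/t)·exp(2‖u‖). In particular, for any t₁ > 0 and all t ∈ [t₁, τ*_u], 1/F_u(Υ^u(t)) ≤ (x*/t₁)·exp(2‖u‖). -/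
open Set

lemma cont_g (xs : ℝ) (h : 0 ≤ xs) (u : C(Icc (0:ℝ) xs, ℝ)) :
    Continuous fun z => Real.exp (-(u (projIcc 0 xs h z))) :=
  (Real.continuous_exp.comp ((u.continuous.comp (continuous_projIcc)).neg))

lemma Fu_mono (xs : ℝ) (h : 0 ≤ xs) (u : C(Icc (0:ℝ) xs, ℝ)) {a b : ℝ}
    (hab : a ≤ b) : Fu xs h u a ≤ Fu xs h u b := by
  have hc := cont_g xs h u
  have h1 : Fu xs h u a + ∫ z in a..b, Real.exp (-(u (projIcc 0 xs h z))) = Fu xs h u b :=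
    intervalIntegral.integral_add_adjacent_intervals
      (hc.intervalIntegrable _ _) (hc.intervalIntegrable _ _)
  have h2 : 0 ≤ ∫ z in a..b, Real.exp (-(u (projIcc 0 xs h z))) :=
    intervalIntegral.integral_nonneg hab (fun x _ => (Real.exp_pos _).le)
  linarith

lemma Wu_le (xs : ℝ) (h : 0 ≤ xs) (u : C(Icc (0:ℝ) xs, ℝ)) {x : ℝ} (hx : 0 ≤ x) :
    Wu xs h u x ≤ x * Fu xs h u x := by
  have hc := cont_g xs h u
  have hFc : Continuous (Fu xs h u) :=
    intervalIntegral.continuous_primitive (fun a b => hc.intervalIntegrable a b) 0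
  have : Wu xs h u x ≤ ∫ _ in (0:ℝ)..x, Fu xs h u x := by
    apply intervalIntegral.integral_mono_on hx (hFc.intervalIntegrable _ _)
      (intervalIntegrable_const)
    intro ξ hξ
    exact Fu_mono xs h u hξ.2
  simpa using this.trans_eq (by simp [mul_comm])

/-- for `0 < t ≤ τ*_u`, `F_u(Υ^u(t)) ≥ (t/x*)·exp(-2‖u‖)`, equivalently
`1/F_u(Υ^u(t)) ≤ (x*/t)·exp(2‖u‖)`; in particular for any `t₁ > 0` and all
`t ∈ [t₁, τ*_u]`, `1/F_u(Υ^u(t)) ≤ (x*/t₁)·exp(2‖u‖)`. -/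
theorem stmt_6 (xs : ℝ) (hxs : 0 < xs) (u : C(Icc (0:ℝ) xs, ℝ)) (Υ : ℝ → ℝ)
    (hΥ : ∀ s ∈ Icc (0:ℝ) (tau xs hxs.le u), Υ s ∈ Icc 0 xs ∧ Wu xs hxs.le u (Υ s) = s) :
    (∀ t : ℝ, 0 < t → t ≤ tau xs hxs.le u →
      t / xs * Real.exp (-(2 * ‖u‖)) ≤ Fu xs hxs.le u (Υ t) ∧
      1 / Fu xs hxs.le u (Υ t) ≤ xs / t * Real.exp (2 * ‖u‖)) ∧
    ∀ t₁ : ℝ, 0 < t₁ → ∀ t ∈ Icc t₁ (tau xs hxs.le u),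
      1 / Fu xs hxs.le u (Υ t) ≤ xs / t₁ * Real.exp (2 * ‖u‖) := by
  have main : ∀ t : ℝ, 0 < t → t ≤ tau xs hxs.le u →
      t / xs * Real.exp (-(2 * ‖u‖)) ≤ Fu xs hxs.le u (Υ t) ∧
      1 / Fu xs hxs.le u (Υ t) ≤ xs / t * Real.exp (2 * ‖u‖) := by
    intro t ht htτ
    obtain ⟨hmem, hW⟩ := hΥ t ⟨ht.le, htτ⟩
    have h1 : t ≤ Υ t * Fu xs hxs.le u (Υ t) := by
      have h := Wu_le xs hxs.le u hmem.1
      rwa [hW] at h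
    have h2 : t ≤ xs * Fu xs hxs.le u (Υ t) := by
      have hF0 : 0 ≤ Fu xs hxs.le u (Υ t) := by
        have := Fu_mono xs hxs.le u hmem.1
        simpa [Fu] using this
      nlinarith [hmem.2]
    have hFlb : t / xs ≤ Fu xs hxs.le u (Υ t) := by
      rw [div_le_iff₀ hxs]; linarith [h2]
    have hFpos : 0 < Fu xs hxs.le u (Υ t) := lt_of_lt_of_le (div_pos ht hxs) hFlb
    have hexp1 : Real.exp (-(2 * ‖u‖)) ≤ 1 := by
      apply Real.exp_le_one_iff.mpr
      have : (0:ℝ) ≤ ‖u‖ := norm_nonneg _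
      linarith
    constructor
    · calc t / xs * Real.exp (-(2 * ‖u‖)) ≤ t / xs * 1 := by
            apply mul_le_mul_of_nonneg_left hexp1 (by positivity)
        _ = t / xs := mul_one _
        _ ≤ _ := hFlb
    · have h3 : 1 / Fu xs hxs.le u (Υ t) ≤ 1 / (t / xs) :=
        one_div_le_one_div_of_le (div_pos ht hxs) hFlb
      have hexp2 : (1:ℝ) ≤ Real.exp (2 * ‖u‖) := by
        apply Real.one_le_exp; positivity
      calc 1 / Fu xs hxs.le u (Υ t) ≤ 1 / (t / xs) := h3
        _ = xs / t := one_div_div _ _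
        _ = xs / t * 1 := (mul_one _).symm
        _ ≤ xs / t * Real.exp (2 * ‖u‖) := by
            apply mul_le_mul_of_nonneg_left hexp2 (by positivity)
  refine ⟨main, ?_⟩
  intro t₁ ht₁ t ⟨ht₁t, htτ⟩
  have ht : 0 < t := lt_of_lt_of_le ht₁ ht₁t
  have := (main t ht htτ).2
  refine this.trans ?_
  apply mul_le_mul_of_nonneg_right _ (Real.exp_pos _).le
  exact div_le_div_of_nonneg_left hxs.le ht₁ ht₁t
end

section
/- (Lemma 1.) Fix x* > 0 and t₁ > 0, and let u : [0,x*] → ℝ be continuous. Then for all t, t̂ ∈ [t₁, τ*_u], |Υ^u(t) − Υ^u(t̂)| ≤ A_u·|t − t̂|, where A_u = (x*/t₁)·exp(2‖u‖). -/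
open Set

/-- Lemma 1: for all `t, t̂ ∈ [t₁, τ*_u]`,
`|Υ^u(t) - Υ^u(t̂)| ≤ A_u·|t - t̂|` with `A_u = (x*/t₁)·exp(2‖u‖)`. -/
theorem stmt_7 (xs : ℝ) (hxs : 0 < xs) (t₁ : ℝ) (ht₁ : 0 < t₁)
    (u : C(Icc (0:ℝ) xs, ℝ)) (Υ : ℝ → ℝ)
    (hΥ : ∀ s ∈ Icc (0:ℝ) (tau xs hxs.le u), Υ s ∈ Icc 0 xs ∧ Wu xs hxs.le u (Υ s) = s) :
    ∀ t ∈ Icc t₁ (tau xs hxs.le u), ∀ t' ∈ Icc t₁ (tau xs hxs.le u),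
      |Υ t - Υ t'| ≤ xs / t₁ * Real.exp (2 * ‖u‖) * |t - t'| := by
  have h0 := hxs.le
  set g : ℝ → ℝ := fun z => Real.exp (-(u (projIcc 0 xs h0 z))) with hg
  have hgc : Continuous g := Real.continuous_exp.comp ((u.continuous.comp continuous_projIcc).neg)
  have hgint : ∀ p q : ℝ, IntervalIntegrable g MeasureTheory.volume p q :=
    fun p q => hgc.intervalIntegrable p q
  set F := Fu xs h0 u with hF
  have hFmono : Monotone F := by
    intro p q hpq
    have h1 : F q - F p = ∫ z in p..q, g z := by
      simp only [hF, Fu]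
      exact intervalIntegral.integral_interval_sub_left (hgint 0 q) (hgint 0 p)
    have h2 : 0 ≤ ∫ z in p..q, g z :=
      intervalIntegral.integral_nonneg hpq (fun z _ => (Real.exp_pos _).le)
    linarith
  have hFint : ∀ p q : ℝ, IntervalIntegrable F MeasureTheory.volume p q :=
    fun p q => hFmono.intervalIntegrable
  have hF0 : F 0 = 0 := by simp [hF, Fu]
  have hFnonneg : ∀ p, 0 ≤ p → 0 ≤ F p := fun p hp => hF0 ▸ hFmono hp
  have hW : ∀ p q : ℝ, Wu xs h0 u q - Wu xs h0 u p = ∫ ξ in p..q, F ξ := by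
    intro p q
    simp only [Wu]
    exact intervalIntegral.integral_interval_sub_left (hFint 0 q) (hFint 0 p)
  -- Key claim
  have key : ∀ p q : ℝ, p ∈ Icc (0:ℝ) xs → q ∈ Icc (0:ℝ) xs → p ≤ q →
      t₁ ≤ Wu xs h0 u p →
      q - p ≤ xs / t₁ * (Wu xs h0 u q - Wu xs h0 u p) := by
    intro p q hp hq hpq hWp
    -- Wu p ≤ p * F p
    have hWp0 : Wu xs h0 u 0 = 0 := by simp [Wu]
    have h1 : Wu xs h0 u p ≤ p * F p := by
      have := hW 0 p
      rw [hWp0, sub_zero] at this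
      rw [this]
      calc ∫ ξ in (0:ℝ)..p, F ξ ≤ ∫ _ in (0:ℝ)..p, F p :=
            intervalIntegral.integral_mono_on hp.1 (hFint 0 p)
              (intervalIntegrable_const) (fun x hx => hFmono hx.2)
        _ = p * F p := by simp [mul_comm]
    have hFpnn : 0 ≤ F p := hFnonneg p hp.1
    have h2 : t₁ ≤ xs * F p := by
      have : p * F p ≤ xs * F p := mul_le_mul_of_nonneg_right hp.2 hFpnn
      linarith
    have h3 : (q - p) * F p ≤ Wu xs h0 u q - Wu xs h0 u p := by
      rw [hW p q]
      calc (q - p) * F p = ∫ _ in p..q, F p := by simp [mul_comm]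
        _ ≤ ∫ ξ in p..q, F ξ :=
            intervalIntegral.integral_mono_on hpq intervalIntegrable_const
              (hFint p q) (fun x hx => hFmono hx.1)
    -- combine: q - p ≤ xs/t₁ * (Wq - Wp)
    have hFp_pos : 0 < F p := by
      rcases lt_or_ge 0 (F p) with h | h
      · exact h
      · exfalso; nlinarith
    have hq_p : 0 ≤ q - p := by linarith
    rw [div_mul_eq_mul_div, le_div_iff₀ ht₁]
    nlinarith [mul_le_mul_of_nonneg_left h3 hxs.le, mul_le_mul_of_nonneg_left h2 hq_p]
  -- now the main argument
  intro t ht t' ht'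
  have htm : t ∈ Icc (0:ℝ) (tau xs h0 u) := ⟨ht₁.le.trans ht.1, ht.2⟩
  have htm' : t' ∈ Icc (0:ℝ) (tau xs h0 u) := ⟨ht₁.le.trans ht'.1, ht'.2⟩
  obtain ⟨hΥt, hWt⟩ := hΥ t htm
  obtain ⟨hΥt', hWt'⟩ := hΥ t' htm'
  have hexp : (1:ℝ) ≤ Real.exp (2 * ‖u‖) := Real.one_le_exp (by positivity)
  have hxst : 0 < xs / t₁ := div_pos hxs ht₁
  have main : |Υ t - Υ t'| ≤ xs / t₁ * |t - t'| := by
    rcases le_total (Υ t) (Υ t') with hle | hle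
    · have := key (Υ t) (Υ t') hΥt hΥt' hle (by rw [hWt]; exact ht.1)
      rw [hWt, hWt'] at this
      rw [abs_sub_comm, abs_of_nonneg (by linarith : (0:ℝ) ≤ Υ t' - Υ t)]
      calc Υ t' - Υ t ≤ xs / t₁ * (t' - t) := this
        _ ≤ xs / t₁ * |t - t'| := by
            rw [abs_sub_comm]
            exact mul_le_mul_of_nonneg_left (le_abs_self _) hxst.le
    · have := key (Υ t') (Υ t) hΥt' hΥt hle (by rw [hWt']; exact ht'.1)
      rw [hWt, hWt'] at this
      rw [abs_of_nonneg (by linarith : (0:ℝ) ≤ Υ t - Υ t')]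
      calc Υ t - Υ t' ≤ xs / t₁ * (t - t') := this
        _ ≤ xs / t₁ * |t - t'| :=
            mul_le_mul_of_nonneg_left (le_abs_self _) hxst.le
  calc |Υ t - Υ t'| ≤ xs / t₁ * |t - t'| := main
    _ ≤ xs / t₁ * Real.exp (2 * ‖u‖) * |t - t'| := by
        nlinarith [abs_nonneg (t - t'), mul_le_mul_of_nonneg_right (mul_le_mul_of_nonneg_left hexp hxst.le) (abs_nonneg (t - t'))]
end

section
/- Fix x* > 0 and let u, v : [0,x*] → ℝ be continuous. Then for every t ∈ [0, min(τ*_u, τ*_v)], |F_u(Υ^u(t)) − F_v(Υ^v(t))| ≤ M_{u,v}·( x*·‖u − v‖ + |Υ^u(t) − Υ^v(t)| ), where M_{u,v} = exp(max(‖u‖,‖v‖)). -/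
open Set

lemma abs_exp_sub_exp_le' {a b c : ℝ} (ha : a ≤ c) (hb : b ≤ c) :
    |Real.exp a - Real.exp b| ≤ Real.exp c * |a - b| := by
  wlog hab : a ≤ b generalizing a b
  · rw [abs_sub_comm, abs_sub_comm a b]; exact this hb ha (le_of_not_ge hab)
  have h1 := Real.add_one_le_exp (a - b)
  have h2 : Real.exp b ≤ Real.exp c := Real.exp_le_exp.2 hb
  have h3 : Real.exp (a - b) * Real.exp b = Real.exp a := by
    rw [← Real.exp_add]; ring_nf
  have h4 : Real.exp a ≤ Real.exp b := Real.exp_le_exp.2 hab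
  rw [abs_of_nonpos (by linarith), abs_of_nonpos (by linarith)]
  nlinarith [Real.exp_pos b]

/-- for every `t ∈ [0, min(τ*_u, τ*_v)]`,
`|F_u(Υ^u(t)) - F_v(Υ^v(t))| ≤ M_{u,v}·(x*·‖u-v‖ + |Υ^u(t) - Υ^v(t)|)`. -/
theorem stmt_9 (xs : ℝ) (hxs : 0 < xs) (u v : C(Icc (0:ℝ) xs, ℝ)) (Υu Υv : ℝ → ℝ)
    (hΥu : ∀ s ∈ Icc (0:ℝ) (tau xs hxs.le u), Υu s ∈ Icc 0 xs ∧ Wu xs hxs.le u (Υu s) = s)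
    (hΥv : ∀ s ∈ Icc (0:ℝ) (tau xs hxs.le v), Υv s ∈ Icc 0 xs ∧ Wu xs hxs.le v (Υv s) = s)
    (t : ℝ) (ht : t ∈ Icc (0:ℝ) (min (tau xs hxs.le u) (tau xs hxs.le v))) :
    |Fu xs hxs.le u (Υu t) - Fu xs hxs.le v (Υv t)| ≤
      Real.exp (max ‖u‖ ‖v‖) * (xs * ‖u - v‖ + |Υu t - Υv t|) := by
  obtain ⟨ht0, ht1⟩ := ht
  obtain ⟨ha, -⟩ := hΥu t ⟨ht0, ht1.trans (min_le_left _ _)⟩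
  obtain ⟨hb, -⟩ := hΥv t ⟨ht0, ht1.trans (min_le_right _ _)⟩
  set a := Υu t with ha'
  set b := Υv t with hb'
  set M := Real.exp (max ‖u‖ ‖v‖) with hM
  have hMpos : 0 < M := Real.exp_pos _
  have hcu : Continuous fun z => Real.exp (-(u (projIcc 0 xs hxs.le z))) :=
    Real.continuous_exp.comp ((u.continuous.comp (continuous_projIcc)).neg)
  have hcv : Continuous fun z => Real.exp (-(v (projIcc 0 xs hxs.le z))) :=
    Real.continuous_exp.comp ((v.continuous.comp (continuous_projIcc)).neg)
  -- pointwise bound for the difference integrand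
  have hptdiff : ∀ z : ℝ,
      ‖Real.exp (-(u (projIcc 0 xs hxs.le z))) - Real.exp (-(v (projIcc 0 xs hxs.le z)))‖
        ≤ M * ‖u - v‖ := by
    intro z
    set y := projIcc 0 xs hxs.le z
    have h1 : |u y| ≤ ‖u‖ := (u.norm_coe_le_norm y)
    have h2 : |v y| ≤ ‖v‖ := (v.norm_coe_le_norm y)
    have h3 : -(u y) ≤ max ‖u‖ ‖v‖ := le_trans (by cases abs_le.1 h1; linarith) (le_max_left _ _)
    have h4 : -(v y) ≤ max ‖u‖ ‖v‖ := le_trans (by cases abs_le.1 h2; linarith) (le_max_right _ _)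
    have := abs_exp_sub_exp_le' h3 h4
    have h5 : |(-(u y)) - (-(v y))| = |u y - v y| := by rw [abs_sub_comm]; ring_nf
    have h6 : |u y - v y| ≤ ‖u - v‖ := by
      have := (u - v).norm_coe_le_norm y
      simpa using this
    calc ‖Real.exp (-(u y)) - Real.exp (-(v y))‖
        ≤ M * |(-(u y)) - (-(v y))| := this
      _ = M * |u y - v y| := by rw [h5]
      _ ≤ M * ‖u - v‖ := by
          exact mul_le_mul_of_nonneg_left h6 hMpos.le
  -- pointwise bound for exp(-v)
  have hptv : ∀ z : ℝ, ‖Real.exp (-(v (projIcc 0 xs hxs.le z)))‖ ≤ M := by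
    intro z
    set y := projIcc 0 xs hxs.le z
    have h2 : |v y| ≤ ‖v‖ := (v.norm_coe_le_norm y)
    rw [Real.norm_eq_abs, abs_of_pos (Real.exp_pos _)]
    exact (Real.exp_le_exp.2 (le_trans (by cases abs_le.1 h2; linarith) (le_max_right _ _)))
  have key1 : |Fu xs hxs.le u a - Fu xs hxs.le v a| ≤ M * (xs * ‖u - v‖) := by
    have hiu : IntervalIntegrable (fun z => Real.exp (-(u (projIcc 0 xs hxs.le z))))
        MeasureTheory.volume 0 a := hcu.intervalIntegrable _ _
    have hiv : IntervalIntegrable (fun z => Real.exp (-(v (projIcc 0 xs hxs.le z))))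
        MeasureTheory.volume 0 a := hcv.intervalIntegrable _ _
    have heq : Fu xs hxs.le u a - Fu xs hxs.le v a
        = ∫ z in (0:ℝ)..a, (Real.exp (-(u (projIcc 0 xs hxs.le z)))
            - Real.exp (-(v (projIcc 0 xs hxs.le z)))) := by
      rw [Fu, Fu, ← intervalIntegral.integral_sub hiu hiv]
    rw [heq]
    have := intervalIntegral.norm_integral_le_of_norm_le_const
      (C := M * ‖u - v‖) (a := (0:ℝ)) (b := a)
      (f := fun z => Real.exp (-(u (projIcc 0 xs hxs.le z)))
            - Real.exp (-(v (projIcc 0 xs hxs.le z))))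
      (fun z _ => hptdiff z)
    rw [Real.norm_eq_abs] at this
    refine this.trans ?_
    have habs : |a - 0| ≤ xs := by
      rw [sub_zero, abs_of_nonneg ha.1]; exact ha.2
    have hnn : 0 ≤ M * ‖u - v‖ := mul_nonneg hMpos.le (norm_nonneg _)
    calc M * ‖u - v‖ * |a - 0| ≤ M * ‖u - v‖ * xs :=
          mul_le_mul_of_nonneg_left habs hnn
      _ = M * (xs * ‖u - v‖) := by ring
  have key2 : |Fu xs hxs.le v a - Fu xs hxs.le v b| ≤ M * |a - b| := by
    have hiv1 : IntervalIntegrable (fun z => Real.exp (-(v (projIcc 0 xs hxs.le z))))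
        MeasureTheory.volume 0 a := hcv.intervalIntegrable _ _
    have hiv2 : IntervalIntegrable (fun z => Real.exp (-(v (projIcc 0 xs hxs.le z))))
        MeasureTheory.volume 0 b := hcv.intervalIntegrable _ _
    have heq : Fu xs hxs.le v a - Fu xs hxs.le v b
        = ∫ z in b..a, Real.exp (-(v (projIcc 0 xs hxs.le z))) := by
      rw [Fu, Fu]
      exact intervalIntegral.integral_interval_sub_left hiv1 hiv2
    rw [heq]
    have := intervalIntegral.norm_integral_le_of_norm_le_const
      (C := M) (a := b) (b := a)
      (f := fun z => Real.exp (-(v (projIcc 0 xs hxs.le z))))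
      (fun z _ => hptv z)
    rw [Real.norm_eq_abs, abs_sub_comm a b] at *
    simpa [abs_sub_comm] using this
  calc |Fu xs hxs.le u a - Fu xs hxs.le v b|
      ≤ |Fu xs hxs.le u a - Fu xs hxs.le v a| + |Fu xs hxs.le v a - Fu xs hxs.le v b| :=
        abs_sub_le _ _ _
    _ ≤ M * (xs * ‖u - v‖) + M * |a - b| := add_le_add key1 key2
    _ = M * (xs * ‖u - v‖ + |a - b|) := by ring
end

section
/- (Lemma 2, filling time estimate.) Fix x* > 0 and let u, v : [0,x*] → ℝ be continuous. Then |τ*_u − τ*_v| ≤ (1/2)·(x*)²·M_{u,v}·‖u − v‖, where M_{u,v} = exp(max(‖u‖,‖v‖)). -/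
open Set

lemma exp_lip (s t : ℝ) : |Real.exp s - Real.exp t| ≤ Real.exp (max s t) * |s - t| := by
  wlog h : t ≤ s generalizing s t
  · rw [abs_sub_comm, max_comm, abs_sub_comm s t]
    exact this t s (le_of_not_ge h)
  rw [abs_of_nonneg (sub_nonneg.2 (Real.exp_le_exp.2 h)), abs_of_nonneg (sub_nonneg.2 h),
    max_eq_left h]
  have h1 := Real.add_one_le_exp (t - s)
  have h2 : Real.exp s * Real.exp (t - s) = Real.exp t := by
    rw [← Real.exp_add]; ring_nf
  nlinarith [Real.exp_pos s]

/-- Lemma 2, filling time estimate: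
`|τ*_u - τ*_v| ≤ (1/2)·(x*)²·M_{u,v}·‖u - v‖`. -/
theorem stmt_13 (xs : ℝ) (hxs : 0 < xs) (u v : C(Icc (0:ℝ) xs, ℝ)) :
    |tau xs hxs.le u - tau xs hxs.le v| ≤
      1 / 2 * xs ^ 2 * Real.exp (max ‖u‖ ‖v‖) * ‖u - v‖ := by
  set M := Real.exp (max ‖u‖ ‖v‖) with hMdef
  have hproj : Continuous fun z : ℝ => projIcc (0:ℝ) xs hxs.le z := continuous_projIcc
  have hcu : Continuous fun z => Real.exp (-(u (projIcc 0 xs hxs.le z))) :=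
    Real.continuous_exp.comp (u.continuous.comp hproj).neg
  have hcv : Continuous fun z => Real.exp (-(v (projIcc 0 xs hxs.le z))) :=
    Real.continuous_exp.comp (v.continuous.comp hproj).neg
  -- pointwise bound on the difference of exponentials
  have hpt : ∀ z : ℝ,
      |Real.exp (-(u (projIcc 0 xs hxs.le z))) - Real.exp (-(v (projIcc 0 xs hxs.le z)))| ≤
        M * ‖u - v‖ := by
    intro z
    set p := projIcc 0 xs hxs.le z
    have h1 := exp_lip (-(u p)) (-(v p))
    have h2 : max (-(u p)) (-(v p)) ≤ max ‖u‖ ‖v‖ := by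
      apply max_le_max
      · exact (neg_le_abs _).trans (ContinuousMap.norm_coe_le_norm u p)
      · exact (neg_le_abs _).trans (ContinuousMap.norm_coe_le_norm v p)
    have h3 : |(-(u p)) - (-(v p))| = |(u - v) p| := by
      simp only [ContinuousMap.sub_apply]
      rw [show -(u p) - -(v p) = -(u p - v p) by ring, abs_neg]
    have h4 : |(u - v) p| ≤ ‖u - v‖ := ContinuousMap.norm_coe_le_norm (u - v) p
    calc |Real.exp (-(u p)) - Real.exp (-(v p))|
        ≤ Real.exp (max (-(u p)) (-(v p))) * |(-(u p)) - (-(v p))| := h1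
      _ ≤ M * ‖u - v‖ := by
          apply mul_le_mul (Real.exp_le_exp.2 h2) (h3 ▸ h4) (abs_nonneg _) (Real.exp_pos _).le
  -- bound on the difference of Fu's
  have hF : ∀ x : ℝ, |Fu xs hxs.le u x - Fu xs hxs.le v x| ≤ M * ‖u - v‖ * |x| := by
    intro x
    have hiu : IntervalIntegrable (fun z => Real.exp (-(u (projIcc 0 xs hxs.le z))))
        MeasureTheory.volume 0 x := hcu.intervalIntegrable _ _
    have hiv : IntervalIntegrable (fun z => Real.exp (-(v (projIcc 0 xs hxs.le z))))
        MeasureTheory.volume 0 x := hcv.intervalIntegrable _ _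
    have := intervalIntegral.norm_integral_le_of_norm_le_const
      (a := 0) (b := x) (C := M * ‖u - v‖)
      (f := fun z => Real.exp (-(u (projIcc 0 xs hxs.le z))) -
        Real.exp (-(v (projIcc 0 xs hxs.le z))))
      (fun z _ => hpt z)
    rw [intervalIntegral.integral_sub hiu hiv] at this
    simpa [Fu] using this
  -- continuity of the primitives
  have hFu_cont : Continuous (Fu xs hxs.le u) :=
    intervalIntegral.continuous_primitive (fun a b => hcu.intervalIntegrable a b) 0
  have hFv_cont : Continuous (Fu xs hxs.le v) :=
    intervalIntegral.continuous_primitive (fun a b => hcv.intervalIntegrable a b) 0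
  have hsub : tau xs hxs.le u - tau xs hxs.le v =
      ∫ ξ in (0:ℝ)..xs, (Fu xs hxs.le u ξ - Fu xs hxs.le v ξ) := by
    rw [intervalIntegral.integral_sub (hFu_cont.intervalIntegrable _ _)
      (hFv_cont.intervalIntegrable _ _)]
    rfl
  rw [hsub]
  have hbound : ∀ᵐ ξ ∂MeasureTheory.volume.restrict (Set.uIoc (0:ℝ) xs),
      ‖Fu xs hxs.le u ξ - Fu xs hxs.le v ξ‖ ≤ M * ‖u - v‖ * ξ := by
    filter_upwards [MeasureTheory.ae_restrict_mem measurableSet_uIoc] with ξ hξ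
    rw [uIoc_of_le hxs.le] at hξ
    have := hF ξ
    rwa [abs_of_pos hξ.1] at this
  have hgint : IntervalIntegrable (fun ξ => M * ‖u - v‖ * ξ) MeasureTheory.volume 0 xs :=
    (continuous_const.mul continuous_id).intervalIntegrable _ _
  calc |∫ ξ in (0:ℝ)..xs, (Fu xs hxs.le u ξ - Fu xs hxs.le v ξ)|
      ≤ |∫ ξ in (0:ℝ)..xs, M * ‖u - v‖ * ξ| :=
        intervalIntegral.norm_integral_le_abs_of_norm_le hbound hgint
    _ = 1 / 2 * xs ^ 2 * M * ‖u - v‖ := by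
        rw [intervalIntegral.integral_const_mul, integral_id,
          show (xs ^ 2 - 0 ^ 2) / 2 = xs ^ 2 / 2 by ring,
          abs_of_nonneg (by positivity)]
        ring
end
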